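/- For every q ∈ (−1, 0] and every real v ≥ 1, one has v^{q+1} − 1 − (q+1)(v−1)·v^{q/2} ≤ 0. -/
import Mathlib

open Real

lemma convexOn_sinh_Ici : ConvexOn ℝ (Set.Ici (0:ℝ)) Real.sinh := by
  refine convexOn_of_deriv2_nonneg (convex_Ici 0) Real.continuous_sinh.continuousOn
    Real.differentiable_sinh.differentiableOn ?_ ?_
  · simp only [Real.deriv_sinh]
    exact Real.differentiable_cosh.differentiableOn
  · intro x hx
    simp only [Function.iterate_succ, Function.iterate_zero, Function.comp_apply, id_eq,
      Real.deriv_sinh, Real.deriv_cosh]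
    rw [interior_Ici] at hx
    exact Real.sinh_nonneg_iff.2 (le_of_lt hx)

lemma sinh_mul_le (p s : ℝ) (hp0 : 0 ≤ p) (hp1 : p ≤ 1) (hs : 0 ≤ s) :
    Real.sinh (p * s) ≤ p * Real.sinh s := by
  have h := convexOn_sinh_Ici.2 (Set.mem_Ici.2 hs) (Set.mem_Ici.2 le_rfl)
    hp0 (by linarith : (0:ℝ) ≤ 1 - p) (by ring)
  simpa [Real.sinh_zero, smul_eq_mul, mul_comm] using h

/-- For every `q ∈ (−1, 0]` and real `v ≥ 1`,
`v^{q+1} − 1 − (q+1)(v−1)·v^{q/2} ≤ 0`. -/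
theorem stmt_6 (q : ℝ) (hq1 : -1 < q) (hq0 : q ≤ 0) (v : ℝ) (hv : 1 ≤ v) :
    v ^ (q + 1) - 1 - (q + 1) * (v - 1) * v ^ (q / 2) ≤ 0 := by
  have hv0 : 0 < v := lt_of_lt_of_le one_pos hv
  set t := Real.log v with ht
  have htnn : 0 ≤ t := Real.log_nonneg hv
  set p := q + 1 with hp
  have hp0 : 0 ≤ p := by linarith
  have hp1 : p ≤ 1 := by linarith
  set s := t / 2 with hsdef
  have hs : 0 ≤ s := by positivity
  have key := sinh_mul_le p s hp0 hp1 hs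
  rw [Real.sinh_eq, Real.sinh_eq] at key
  have hev : v = Real.exp t := (Real.exp_log hv0).symm
  have h1 : v ^ (q + 1) = Real.exp (p * t) := by
    rw [Real.rpow_def_of_pos hv0, ← ht, ← hp, mul_comm]
  have h2 : v ^ (q / 2) = Real.exp ((p - 1) * s) := by
    rw [Real.rpow_def_of_pos hv0, ← ht]
    congr 1
    rw [hsdef, hp]; ring
  rw [h1, h2, hev]
  have e1 : Real.exp (p * s) * Real.exp (p * s) = Real.exp (p * t) := by
    rw [← Real.exp_add]; congr 1; rw [hsdef]; ring
  have e2 : Real.exp (p * s) * Real.exp (-(p * s)) = 1 := by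
    rw [← Real.exp_add]; simp
  have e3 : Real.exp (p * s) * Real.exp s = Real.exp t * Real.exp ((p - 1) * s) := by
    rw [← Real.exp_add, ← Real.exp_add]; congr 1; rw [hsdef]; ring
  have e4 : Real.exp (p * s) * Real.exp (-s) = Real.exp ((p - 1) * s) := by
    rw [← Real.exp_add]; congr 1; ring
  have h := mul_le_mul_of_nonneg_left key (le_of_lt (Real.exp_pos (p * s)))
  have L : Real.exp (p * s) * ((Real.exp (p * s) - Real.exp (-(p * s))) / 2)
      = (Real.exp (p * t) - 1) / 2 := by
    linear_combination e1 / 2 - e2 / 2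
  have R0 : Real.exp (p * s) * (Real.exp s - Real.exp (-s))
      = (Real.exp t - 1) * Real.exp ((p - 1) * s) := by
    rw [mul_sub, e3, e4]; ring
  have R : Real.exp (p * s) * (p * ((Real.exp s - Real.exp (-s)) / 2))
      = p * ((Real.exp t - 1) * Real.exp ((p - 1) * s)) / 2 := by
    linear_combination (p / 2) * R0
  rw [L, R] at h
  nlinarith [h]
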